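/- There exists a Dedekind complete vector lattice E of dimension at least 2 and infinite E̅⁺-valued measures μ, ν on (ℕ, 2^ℕ) such that μ ∧ ν exists in the cone of E̅⁺-valued measures and equals the zero measure, yet the formula inf{μ(Γ) + ν(Δ∖Γ) : Γ ⊆ Δ} fails to give (μ∧ν)(Δ) for some Δ. Concretely: take disjoint nonzero x, y ∈ E⁺, μ(Δ) := |Δ|·x and ν(Δ) := |Δ|·y (with value ∞ when |Δ| is infinite); then μ ∧ ν = 0 but inf{μ(Γ) + ν(Δ∖Γ) : Γ ⊆ Δ} = ∞ whenever Δ is infinite. -/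

import Mathlib

open scoped Classical

variable {E : Type*} [Lattice E] [AddCommGroup E]
  [CovariantClass E E (· + ·) (· ≤ ·)]

/-- An `E̅⁺`-valued measure on `(ℕ, 2^ℕ)`, `E̅ = WithTop E`. -/
def IsEMeasure (μ : Set ℕ → WithTop E) : Prop :=
  μ ∅ = 0 ∧ (∀ Δ, MeasurableSet Δ → 0 ≤ μ Δ) ∧
    ∀ Δ : ℕ → Set ℕ, (∀ n, MeasurableSet (Δ n)) →
      Pairwise (Function.onFun Disjoint Δ) →
      IsLUB (Set.range fun N => ∑ n ∈ Finset.range N, μ (Δ n))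
        (μ (⋃ n, Δ n))

/-- The measure `Δ ↦ |Δ|·x`, with value `∞` for infinite `Δ`. -/
noncomputable def cardMeas (x : E) (Δ : Set ℕ) : WithTop E :=
  if h : Δ.Finite then ((h.toFinset.card • x : E) : WithTop E) else ⊤

namespace Stmt12Aux

lemma cardMeas_of_finite (x : E) {Δ : Set ℕ} (h : Δ.Finite) :
    cardMeas x Δ = ((h.toFinset.card • x : E) : WithTop E) := dif_pos h

lemma cardMeas_of_infinite (x : E) {Δ : Set ℕ} (h : Δ.Infinite) :
    cardMeas x Δ = ⊤ := dif_neg h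

lemma cardMeas_empty (x : E) : cardMeas x (∅ : Set ℕ) = 0 := by
  rw [cardMeas_of_finite x Set.finite_empty]
  simp

lemma cardMeas_singleton (x : E) (n : ℕ) : cardMeas x ({n} : Set ℕ) = (x : WithTop E) := by
  rw [cardMeas_of_finite x (Set.finite_singleton n)]
  simp

lemma cardMeas_nonneg {x : E} (hx : 0 ≤ x) (Δ : Set ℕ) : 0 ≤ cardMeas x Δ := by
  unfold cardMeas
  split
  · exact_mod_cast nsmul_nonneg hx _
  · exact le_top

lemma cardMeas_mono {x : E} (hx : 0 ≤ x) {A B : Set ℕ} (hB : B.Finite) (hAB : A ⊆ B) :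
    cardMeas x A ≤ cardMeas x B := by
  have hA := hB.subset hAB
  rw [cardMeas_of_finite x hA, cardMeas_of_finite x hB, WithTop.coe_le_coe]
  exact nsmul_le_nsmul_left hx (Finset.card_le_card (by
    intro a ha
    rw [Set.Finite.mem_toFinset] at ha ⊢
    exact hAB ha))

lemma cardMeas_union {x : E} {A B : Set ℕ} (hA : A.Finite) (hB : B.Finite)
    (hd : Disjoint A B) : cardMeas x (A ∪ B) = cardMeas x A + cardMeas x B := by
  rw [cardMeas_of_finite x (hA.union hB), cardMeas_of_finite x hA, cardMeas_of_finite x hB,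
    ← WithTop.coe_add, ← add_nsmul, WithTop.coe_eq_coe]
  congr 1
  have h1 : (hA.union hB).toFinset = hA.toFinset ∪ hB.toFinset := by
    ext a; simp
  rw [h1, Finset.card_union_of_disjoint]
  rw [Set.Finite.disjoint_toFinset]
  exact hd

lemma partialUnion_finite {Δ : ℕ → Set ℕ} (hfin : ∀ n, (Δ n).Finite) (N : ℕ) :
    (⋃ n ∈ Finset.range N, Δ n).Finite :=
  Set.Finite.biUnion (Finset.range N).finite_toSet (fun n _ => hfin n)

lemma cardMeas_sum {x : E} {Δ : ℕ → Set ℕ} (hfin : ∀ n, (Δ n).Finite)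
    (hd : Pairwise (Function.onFun Disjoint Δ)) (N : ℕ) :
    ∑ n ∈ Finset.range N, cardMeas x (Δ n) = cardMeas x (⋃ n ∈ Finset.range N, Δ n) := by
  induction N with
  | zero => simp [cardMeas_empty]
  | succ N ih =>
    have h1 : (⋃ n ∈ Finset.range (N + 1), Δ n) = (⋃ n ∈ Finset.range N, Δ n) ∪ Δ N := by
      ext a
      simp only [Set.mem_iUnion, Finset.mem_range, Set.mem_union, Nat.lt_succ_iff_lt_or_eq]
      constructor
      · rintro ⟨n, hn | rfl, ha⟩
        · exact Or.inl ⟨n, hn, ha⟩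
        · exact Or.inr ha
      · rintro (⟨n, hn, ha⟩ | ha)
        · exact ⟨n, Or.inl hn, ha⟩
        · exact ⟨N, Or.inr rfl, ha⟩
    have h2 : Disjoint (⋃ n ∈ Finset.range N, Δ n) (Δ N) := by
      refine Set.disjoint_left.2 ?_
      intro a ha haN
      simp only [Set.mem_iUnion, Finset.mem_range] at ha
      obtain ⟨n, hn, hna⟩ := ha
      exact Set.disjoint_left.1 (hd (Nat.ne_of_lt hn)) hna haN
    rw [Finset.sum_range_succ, ih, h1,
      cardMeas_union (partialUnion_finite hfin N) (hfin N) h2]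

lemma arch (hDed : ∀ T : Set E, T.Nonempty → BddAbove T → ∃ a, IsLUB T a)
    {x a : E} (hx0 : 0 ≤ x) (hx : x ≠ 0) (h : ∀ n : ℕ, n • x ≤ a) : False := by
  obtain ⟨s, hs⟩ := hDed (Set.range fun n : ℕ => n • x) ⟨0 • x, 0, rfl⟩
    ⟨a, by rintro _ ⟨n, rfl⟩; exact h n⟩
  have h2 : s ≤ s - x := by
    refine hs.2 ?_
    rintro _ ⟨n, rfl⟩
    have h3 : (n + 1) • x ≤ s := hs.1 ⟨n + 1, rfl⟩
    rw [succ_nsmul] at h3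
    exact le_sub_iff_add_le.2 h3
  have h4 : x ≤ 0 := by
    have := sub_nonneg.2 h2
    rwa [sub_sub_cancel_left, neg_nonneg] at this
  exact hx (le_antisymm h4 hx0)

lemma cardMeas_isEMeasure (hDed : ∀ T : Set E, T.Nonempty → BddAbove T → ∃ a, IsLUB T a)
    {x : E} (hx0 : 0 ≤ x) (hx : x ≠ 0) : IsEMeasure (cardMeas x) := by
  refine ⟨cardMeas_empty x, fun Δ _ => cardMeas_nonneg hx0 Δ, fun Δ _ hd => ?_⟩
  by_cases hU : (⋃ n, Δ n).Finite
  · -- finite union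
    have hfin : ∀ n, (Δ n).Finite := fun n => hU.subset (Set.subset_iUnion Δ n)
    -- only finitely many indices have nonempty Δ n
    have hN : ∃ N₀ : ℕ, ∀ n, N₀ ≤ n → Δ n = ∅ := by
      set f : ℕ → ℕ := fun n => if h : (Δ n).Nonempty then h.some else 0 with hf
      have hmem : ∀ n ∈ {n | (Δ n).Nonempty}, f n ∈ Δ n := by
        intro n hn
        simp only [hf]
        split
        · exact Set.Nonempty.some_mem _
        · exact absurd hn (by assumption)
      have hinj : Set.InjOn f {n | (Δ n).Nonempty} := by
        intro m hm n hn hmn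
        by_contra hne
        exact Set.disjoint_left.1 (hd hne) (hmem m hm) (hmn ▸ hmem n hn)
      have himg : f '' {n | (Δ n).Nonempty} ⊆ ⋃ n, Δ n := by
        rintro _ ⟨n, hn, rfl⟩
        exact Set.mem_iUnion.2 ⟨n, hmem n hn⟩
      have hfinset : {n | (Δ n).Nonempty}.Finite :=
        Set.Finite.of_finite_image (hU.subset himg) hinj
      obtain ⟨N₀, hN₀⟩ := hfinset.bddAbove
      refine ⟨N₀ + 1, fun n hn => ?_⟩
      by_contra hne
      have : n ≤ N₀ := hN₀ (Set.nonempty_iff_ne_empty.2 hne)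
      omega
    obtain ⟨N₀, hN₀⟩ := hN
    have hUnionEq : (⋃ n ∈ Finset.range N₀, Δ n) = ⋃ n, Δ n := by
      refine Set.Subset.antisymm (Set.iUnion₂_subset fun n _ => Set.subset_iUnion Δ n) ?_
      intro a ha
      obtain ⟨n, hn⟩ := Set.mem_iUnion.1 ha
      have hlt : n < N₀ := by
        by_contra hge
        rw [hN₀ n (le_of_not_gt hge)] at hn
        exact hn
      exact Set.mem_iUnion.2 ⟨n, Set.mem_iUnion.2 ⟨Finset.mem_range.2 hlt, hn⟩⟩
    constructor
    · rintro _ ⟨N, rfl⟩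
      show ∑ n ∈ Finset.range N, cardMeas x (Δ n) ≤ cardMeas x (⋃ n, Δ n)
      rw [cardMeas_sum hfin hd N]
      exact cardMeas_mono hx0 hU (Set.iUnion₂_subset fun n _ => Set.subset_iUnion Δ n)
    · intro b hb
      have h1 : ∑ n ∈ Finset.range N₀, cardMeas x (Δ n) ≤ b := hb ⟨N₀, rfl⟩
      rwa [cardMeas_sum hfin hd N₀, hUnionEq] at h1
  · -- infinite union
    rw [cardMeas_of_infinite x hU]
    constructor
    · rintro _ ⟨N, rfl⟩
      exact le_top
    · intro b hb
      by_cases hall : ∀ n, (Δ n).Finite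
      · induction b using WithTop.recTopCoe with
        | top => exact le_rfl
        | coe a =>
          exfalso
          refine arch hDed hx0 hx (a := a) fun m => ?_
          have hUinf : (⋃ n, Δ n).Infinite := hU
          obtain ⟨S, hS, hScard⟩ := hUinf.exists_subset_card_eq m
          have hSmem : ∀ i ∈ S, ∃ n, i ∈ Δ n := fun i hi => Set.mem_iUnion.1 (hS hi)
          set g : ℕ → ℕ := fun i => if h : ∃ n, i ∈ Δ n then h.choose else 0 with hg
          set N : ℕ := S.sup g + 1 with hNdef
          have hSsub : ↑S ⊆ ⋃ n ∈ Finset.range N, Δ n := by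
            intro i hi
            have hi' : i ∈ S := hi
            have hex := hSmem i hi'
            have hgi : i ∈ Δ (g i) := by
              simp only [hg]
              split
              · exact Exists.choose_spec (by assumption)
              · exact absurd hex (by assumption)
            have hlt : g i < N := Nat.lt_succ_of_le (Finset.le_sup hi')
            exact Set.mem_iUnion.2 ⟨g i, Set.mem_iUnion.2 ⟨Finset.mem_range.2 hlt, hgi⟩⟩
          have hPU := partialUnion_finite hall N
          have h1 : ∑ n ∈ Finset.range N, cardMeas x (Δ n) ≤ (a : WithTop E) := hb ⟨N, rfl⟩
          rw [cardMeas_sum hall hd N, cardMeas_of_finite x hPU, WithTop.coe_le_coe] at h1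
          refine le_trans (nsmul_le_nsmul_left hx0 ?_) h1
          rw [← hScard]
          refine Finset.card_le_card fun i hi => ?_
          rw [Set.Finite.mem_toFinset]
          exact hSsub hi
      · push_neg at hall
        obtain ⟨n, hn⟩ := hall
        have h1 : ∑ k ∈ Finset.range (n + 1), cardMeas x (Δ k) ≤ b := hb ⟨n + 1, rfl⟩
        rw [WithTop.sum_eq_top.2 ⟨n, Finset.mem_range.2 (Nat.lt_succ_self n),
          cardMeas_of_infinite x hn⟩] at h1
        exact h1

end Stmt12Aux

open Stmt12Aux in
/-- for a Dedekind complete vector lattice `E` with two disjoint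
nonzero positive elements `x, y`, the infinite measures `μ = |·|·x` and
`ν = |·|·y` on `(ℕ, 2^ℕ)` have infimum `0` in the cone of `E̅⁺`-valued
measures, yet `inf {μ(Γ) + ν(Δ∖Γ) : Γ ⊆ Δ} = ∞` whenever `Δ` is infinite, so
the infimum formula fails for infinite measures. -/
theorem stmt_12
    (hDed : ∀ T : Set E, T.Nonempty → BddAbove T → ∃ a, IsLUB T a)
    (x y : E) (hx0 : 0 ≤ x) (hx : x ≠ 0) (hy0 : 0 ≤ y) (hy : y ≠ 0)
    (hdisj : x ⊓ y = 0) :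
    IsEMeasure (cardMeas x) ∧ IsEMeasure (cardMeas y) ∧
      cardMeas x Set.univ = ⊤ ∧ cardMeas y Set.univ = ⊤ ∧
      IsEMeasure (fun _ : Set ℕ => (0 : WithTop E)) ∧
      (∀ σ : Set ℕ → WithTop E, IsEMeasure σ →
        (∀ Δ, MeasurableSet Δ → σ Δ ≤ cardMeas x Δ) →
        (∀ Δ, MeasurableSet Δ → σ Δ ≤ cardMeas y Δ) →
        ∀ Δ, MeasurableSet Δ → σ Δ = 0) ∧
      ∀ Δ : Set ℕ, Δ.Infinite →
        IsGLB {z : WithTop E | ∃ Γ, MeasurableSet Γ ∧ Γ ⊆ Δ ∧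
          z = cardMeas x Γ + cardMeas y (Δ \ Γ)} ⊤ := by
  refine ⟨cardMeas_isEMeasure hDed hx0 hx, cardMeas_isEMeasure hDed hy0 hy,
    cardMeas_of_infinite x Set.infinite_univ, cardMeas_of_infinite y Set.infinite_univ,
    ?_, ?_, ?_⟩
  · -- zero is a measure
    refine ⟨rfl, fun _ _ => le_rfl, fun Δ _ _ => ?_⟩
    simp only [Finset.sum_const_zero]
    rw [Set.range_const]
    exact isLUB_singleton
  · -- any measure below both is zero
    intro σ hσ hσx hσy Δ _
    -- first: σ of any singleton is 0
    have hsing : ∀ n : ℕ, σ {n} = 0 := by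
      intro n
      have h1 : σ {n} ≤ (x : WithTop E) := by
        have := hσx {n} trivial
        rwa [cardMeas_singleton] at this
      have h2 : σ {n} ≤ (y : WithTop E) := by
        have := hσy {n} trivial
        rwa [cardMeas_singleton] at this
      have h0 : (0 : WithTop E) ≤ σ {n} := hσ.2.1 {n} trivial
      have hne : σ {n} ≠ ⊤ := fun h => by
        rw [h] at h1
        exact WithTop.coe_ne_top (top_le_iff.1 h1)
      lift σ {n} to E using hne with b hb
      rw [WithTop.coe_le_coe] at h1 h2
      rw [← WithTop.coe_zero, WithTop.coe_le_coe] at h0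
      rw [← WithTop.coe_zero, WithTop.coe_eq_coe]
      refine le_antisymm ?_ h0
      calc b ≤ x ⊓ y := le_inf h1 h2
        _ = 0 := hdisj
    -- decompose Δ into singletons
    set Δ' : ℕ → Set ℕ := fun n => Δ ∩ {n} with hΔ'
    have hmeas : ∀ n, MeasurableSet (Δ' n) := fun n => trivial
    have hdisj' : Pairwise (Function.onFun Disjoint Δ') := by
      intro m n hmn
      refine Set.disjoint_left.2 fun a ham han => ?_
      have h1 : a = m := ham.2
      have h2 : a = n := han.2
      exact hmn (h1 ▸ h2)
    have hunion : (⋃ n, Δ' n) = Δ := by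
      ext a
      simp only [hΔ', Set.mem_iUnion, Set.mem_inter_iff, Set.mem_singleton_iff]
      exact ⟨fun ⟨n, h, _⟩ => h, fun h => ⟨a, h, rfl⟩⟩
    have hzero : ∀ n, σ (Δ' n) = 0 := by
      intro n
      by_cases hn : n ∈ Δ
      · have : Δ' n = {n} := by
          ext a
          simp only [hΔ', Set.mem_inter_iff, Set.mem_singleton_iff]
          exact ⟨fun h => h.2, fun h => ⟨h ▸ hn, h⟩⟩
        rw [this]
        exact hsing n
      · have : Δ' n = ∅ := by
          ext a
          simp only [hΔ', Set.mem_inter_iff, Set.mem_singleton_iff, Set.mem_empty_iff_false,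
            iff_false, not_and]
          rintro ha rfl
          exact hn ha
        rw [this]
        exact hσ.1
    have hlub := hσ.2.2 Δ' hmeas hdisj'
    rw [hunion] at hlub
    have heq : (fun N => ∑ n ∈ Finset.range N, σ (Δ' n)) = fun _ => (0 : WithTop E) := by
      funext N
      exact Finset.sum_eq_zero fun n _ => hzero n
    rw [heq, Set.range_const] at hlub
    exact hlub.unique isLUB_singleton
  · -- the GLB formula fails
    intro Δ hΔ
    constructor
    · rintro z ⟨Γ, _, hΓΔ, rfl⟩
      by_cases hΓ : Γ.Finite
      · have : (Δ \ Γ).Infinite := hΔ.diff hΓ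
        rw [cardMeas_of_infinite y this, WithTop.add_top]
      · rw [cardMeas_of_infinite x (hΓ : Γ.Infinite), WithTop.top_add]
    · intro b _
      exact le_top
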